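/- Let p, n₁ be positive integers with n₁ < p, σ² > 0, β⁽²⁾ ∈ ℝ^p with β⁽²⁾ ≠ 0, β̃ ∈ ℝ^p, SNR := ‖β⁽²⁾‖₂²/σ², SSR := ‖β̃‖₂²/‖β⁽²⁾‖₂². For a real variable n₂ ∈ [0, p−n₁) define 𝓡(n₂) := σ²·(n₁+n₂)/(p−n₁−n₂) + ((p−n₁−n₂)/p)‖β⁽²⁾‖₂² + (n₁(p−n₁)/(p(p−n₁−n₂)))‖β̃‖₂². Then 𝓡 is strictly convex on [0, p−n₁) and attains its minimum over [0, p−n₁) at the unique point n₂* := max{0, p − n₁ − √(p²/SNR + n₁(p−n₁)·SSR)}. -/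

import Mathlib

set_option maxHeartbeats 1000000 in
/-- The limiting pooled-interpolator risk, as a function of a real target
sample size `n₂ ∈ [0, p−n₁)`, is strictly convex and is minimized at the unique point
`n₂* = max{0, p − n₁ − √(p²/SNR + n₁(p−n₁)·SSR)}`. -/
theorem optimal_target_sample_size
    (p n₁ : ℕ) (hn₁ : 0 < n₁) (hover : n₁ < p)
    (σ2 : ℝ) (hσ : 0 < σ2)
    (β2 tβ : Fin p → ℝ) (hβ2 : β2 ≠ 0) :
    ∀ (SNR SSR : ℝ) (R : ℝ → ℝ) (nstar : ℝ),
      SNR = (∑ i, (β2 i) ^ 2) / σ2 →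
      SSR = (∑ i, (tβ i) ^ 2) / (∑ i, (β2 i) ^ 2) →
      R = (fun x : ℝ =>
        σ2 * (((n₁ : ℝ) + x) / ((p : ℝ) - (n₁ : ℝ) - x))
        + (((p : ℝ) - (n₁ : ℝ) - x) / (p : ℝ)) * (∑ i, (β2 i) ^ 2)
        + ((n₁ : ℝ) * ((p : ℝ) - (n₁ : ℝ)) / ((p : ℝ) * ((p : ℝ) - (n₁ : ℝ) - x)))
            * (∑ i, (tβ i) ^ 2)) →
      nstar = max 0 ((p : ℝ) - (n₁ : ℝ)
        - Real.sqrt ((p : ℝ) ^ 2 / SNR + (n₁ : ℝ) * ((p : ℝ) - (n₁ : ℝ)) * SSR)) →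
      StrictConvexOn ℝ (Set.Ico (0 : ℝ) ((p : ℝ) - (n₁ : ℝ))) R ∧
      nstar ∈ Set.Ico (0 : ℝ) ((p : ℝ) - (n₁ : ℝ)) ∧
      (∀ x ∈ Set.Ico (0 : ℝ) ((p : ℝ) - (n₁ : ℝ)), R nstar ≤ R x) ∧
      (∀ x ∈ Set.Ico (0 : ℝ) ((p : ℝ) - (n₁ : ℝ)), R x = R nstar → x = nstar) := by
  intro SNR SSR R nstar hSNR hSSR hR hns
  set B := ∑ i, (β2 i) ^ 2 with hB
  set T := ∑ i, (tβ i) ^ 2 with hT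
  have hBpos : 0 < B := by
    obtain ⟨i, hi⟩ := Function.ne_iff.mp hβ2
    exact Finset.sum_pos' (fun j _ => sq_nonneg _)
      ⟨i, Finset.mem_univ i, pow_two_pos_of_ne_zero hi⟩
  have hTnn : 0 ≤ T := Finset.sum_nonneg fun j _ => sq_nonneg _
  have hn1 : (0:ℝ) < (n₁:ℝ) := by exact_mod_cast hn₁
  have hpn : (n₁:ℝ) < (p:ℝ) := by exact_mod_cast hover
  have hp : (0:ℝ) < (p:ℝ) := lt_trans hn1 hpn
  set m : ℝ := (p:ℝ) - (n₁:ℝ) with hm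
  have hmpos : 0 < m := by simp only [hm]; linarith
  set C : ℝ := σ2 * (p:ℝ) + (n₁:ℝ) * m * T / (p:ℝ) with hC
  set D : ℝ := B / (p:ℝ) with hD
  have hCpos : 0 < C := by
    have h1 : 0 ≤ (n₁:ℝ) * m * T / (p:ℝ) := by positivity
    have h2 : 0 < σ2 * (p:ℝ) := by positivity
    rw [hC]; linarith
  have hDpos : 0 < D := by rw [hD]; positivity
  -- the key reformulation of R on the domain
  have key : ∀ x ∈ Set.Ico (0:ℝ) m, R x = C / (m - x) + D * (m - x) - σ2 := by
    intro x hx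
    have hmx : 0 < m - x := by
      have := hx.2; linarith
    have hmx' : m - x ≠ 0 := ne_of_gt hmx
    rw [hR]
    simp only [hC, hD, hm] at *
    field_simp
    ring
  -- the argument of the square root
  set s : ℝ := Real.sqrt ((p:ℝ) ^ 2 / SNR + (n₁:ℝ) * m * SSR) with hs
  have harg : (p:ℝ) ^ 2 / SNR + (n₁:ℝ) * m * SSR = C / D := by
    rw [hSNR, hSSR, hC, hD]
    field_simp
  have hargpos : 0 < (p:ℝ) ^ 2 / SNR + (n₁:ℝ) * m * SSR := by
    rw [harg]; exact div_pos hCpos hDpos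
  have hspos : 0 < s := Real.sqrt_pos.mpr hargpos
  have hs2 : s ^ 2 = C / D := by
    rw [hs, Real.sq_sqrt hargpos.le, harg]
  have hCs : C = D * s ^ 2 := by
    rw [hs2]; field_simp
  -- membership of nstar
  have hnsmem : nstar ∈ Set.Ico (0:ℝ) m := by
    constructor
    · rw [hns]; exact le_max_left _ _
    · rw [hns]; exact max_lt hmpos (by linarith)
  -- minimality in terms of u = m - x
  have hmin : ∀ u : ℝ, 0 < u → u ≤ m →
      C / (m - nstar) + D * (m - nstar) ≤ C / u + D * u := by
    intro u hu hum
    rcases le_or_gt s m with hsm | hsm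
    · have hnv : nstar = m - s := by
        rw [hns]; exact max_eq_right (by linarith)
      have hms : m - nstar = s := by rw [hnv]; ring
      rw [hms]
      have hdiff : C / u + D * u - (C / s + D * s) = D * (u - s) ^ 2 / u := by
        rw [hCs]
        field_simp
        ring
      have : 0 ≤ D * (u - s) ^ 2 / u := by positivity
      linarith
    · have hnv : nstar = 0 := by
        rw [hns]; exact max_eq_left (by linarith)
      have hms : m - nstar = m := by rw [hnv]; ring
      rw [hms]
      have hdiff : C / u + D * u - (C / m + D * m)
          = (m - u) * (C - D * u * m) / (u * m) := by
        field_simp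
        ring
      have h1 : 0 ≤ m - u := by linarith
      have h2 : 0 ≤ C - D * u * m := by
        rw [hCs]
        have : u * m < s ^ 2 := by nlinarith
        nlinarith
      have : 0 ≤ (m - u) * (C - D * u * m) / (u * m) := by positivity
      linarith
  -- strict convexity
  have hconv : StrictConvexOn ℝ (Set.Ico (0:ℝ) m) R := by
    refine ⟨convex_Ico _ _, ?_⟩
    intro x hx y hy hxy a b ha hb hab
    have hb' : b = 1 - a := by linarith
    subst hb'
    have hz : a • x + (1 - a) • y ∈ Set.Ico (0:ℝ) m :=
      (convex_Ico (0:ℝ) m) hx hy ha.le hb.le hab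
    simp only [smul_eq_mul] at hz ⊢
    rw [key _ hx, key _ hy, key _ hz]
    have hu : 0 < m - x := by have := hx.2; linarith
    have hw : 0 < m - y := by have := hy.2; linarith
    have huw : m - x ≠ m - y := by intro h; apply hxy; linarith
    have hmz : m - (a * x + (1 - a) * y) = a * (m - x) + (1 - a) * (m - y) := by
      ring
    rw [hmz]
    set u := m - x
    set w := m - y
    have hauw : 0 < a * u + (1 - a) * w := by positivity
    have hdiff : a * (C / u + D * u - σ2) + (1 - a) * (C / w + D * w - σ2)
        - (C / (a * u + (1 - a) * w) + D * (a * u + (1 - a) * w) - σ2)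
        = C * a * (1 - a) * (u - w) ^ 2 / (u * w * (a * u + (1 - a) * w)) := by
      field_simp
      ring
    have hne2 : (u - w) ^ 2 > 0 := by
      have : u - w ≠ 0 := sub_ne_zero.mpr huw
      positivity
    have hpos : 0 < C * a * (1 - a) * (u - w) ^ 2 / (u * w * (a * u + (1 - a) * w)) := by
      positivity
    linarith
  refine ⟨hconv, hnsmem, ?_, ?_⟩
  · intro x hx
    have hmx : 0 < m - x := by have := hx.2; linarith
    have hxm : m - x ≤ m := by have := hx.1; linarith
    rw [key _ hx, key _ hnsmem]
    have := hmin (m - x) hmx hxm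
    linarith
  · intro x hx hEq
    by_contra hne
    have hmins : ∀ y ∈ Set.Ico (0:ℝ) m, R nstar ≤ R y := by
      intro y hy
      have hmy : 0 < m - y := by have := hy.2; linarith
      have hym : m - y ≤ m := by have := hy.1; linarith
      rw [key _ hy, key _ hnsmem]
      have := hmin (m - y) hmy hym
      linarith
    have h2 := hconv.2 hx hnsmem hne (by norm_num : (0:ℝ) < 1/2)
      (by norm_num : (0:ℝ) < 1/2) (by norm_num)
    have hzmem : (1/2 : ℝ) • x + (1/2 : ℝ) • nstar ∈ Set.Ico (0:ℝ) m :=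
      (convex_Ico (0:ℝ) m) hx hnsmem (by norm_num) (by norm_num) (by norm_num)
    have h3 := hmins _ hzmem
    simp only [smul_eq_mul] at h2 h3
    rw [hEq] at h2
    linarith
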